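/- Let E ⊆ Σ* be a regular language with ε ∉ E, let u ∈ Σ*, and let A be a CEFA over Σ with k cost registers. Then the set {(w, n) ∈ Σ* × ℤ^k : (replaceAll_{E,u}(w), n) ∈ L(A)}, the cost-enriched pre-image of L(A) under the leftmost-longest replaceAll function replaceAll_{E,u}, is a cost-enriched regular language with k cost registers. -/

import Mathlib

/-- A cost-enriched finite automaton (CEFA) over alphabet `σ` with `k` cost registers:
states `Q`, a transition set `δ` of tuples `(q, a, q', η)` with update vector
`η : Fin k → ℤ`, initial states `I` and final states `F`. -/
structure CEFA (σ : Type) (k : ℕ) where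
  Q : Type
  δ : Set (Q × σ × Q × (Fin k → ℤ))
  I : Set Q
  F : Set Q

namespace CEFA

variable {σ : Type} {k : ℕ}

/-- A CEFA is finite if its state set and its transition set are finite. -/
def IsFinite (A : CEFA σ k) : Prop := Finite A.Q ∧ A.δ.Finite

/-- `Reach A q w n q'` holds if there is a sequence of transitions of `A` from `q` to `q'`
reading the word `w`, whose cost updates sum up to `n`. -/
inductive Reach (A : CEFA σ k) : A.Q → List σ → (Fin k → ℤ) → A.Q → Prop
  | nil (q : A.Q) : Reach A q [] 0 q
  | cons {q q' q'' : A.Q} {a : σ} {w : List σ} {η n : Fin k → ℤ} :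
      (q, a, q', η) ∈ A.δ → Reach A q' w n q'' → Reach A q (a :: w) (η + n) q''

/-- The cost-enriched language of a CEFA: all pairs `(w, n)` admitting an accepting run. -/
def Lang (A : CEFA σ k) : Set (List σ × (Fin k → ℤ)) :=
  {p | ∃ q₀ qf, q₀ ∈ A.I ∧ qf ∈ A.F ∧ Reach A q₀ p.1 p.2 qf}

end CEFA

/-- A cost-enriched regular language (CERL): a set accepted by some (finite) CEFA. -/
def IsCERL {σ : Type} {k : ℕ} (L : Set (List σ × (Fin k → ℤ))) : Prop :=
  ∃ A : CEFA σ k, A.IsFinite ∧ A.Lang = L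

/-- The graph of the leftmost-longest `replaceAll` function replacing occurrences of the
language `E` (with `ε ∉ E`) by the word `u`:
* if no factor of `w` belongs to `E`, then `w` is mapped to itself;
* otherwise `w = w1 ++ m ++ w2` where `w1` is the shortest prefix of `w` such that some
  word of `E` is a prefix of the remaining suffix, `m` is the longest prefix of that
  suffix belonging to `E`, and `w` is mapped to `w1 ++ u ++ replaceAll(w2)`. -/
inductive ReplaceAll {σ : Type} (E : Set (List σ)) (u : List σ) : List σ → List σ → Prop
  | noMatch {w : List σ} (h : ∀ w1 m w2, w = w1 ++ m ++ w2 → m ∉ E) :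
      ReplaceAll E u w w
  | step {w1 m w2 r : List σ} (hm : m ∈ E)
      (hleftmost : ∀ w1' m' w2', w1 ++ m ++ w2 = w1' ++ m' ++ w2' →
        w1'.length < w1.length → m' ∉ E)
      (hlongest : ∀ m' w2', m ++ w2 = m' ++ w2' → m.length < m'.length → m' ∉ E)
      (hrec : ReplaceAll E u w2 r) :
      ReplaceAll E u (w1 ++ m ++ w2) (w1 ++ u ++ r)

namespace ReplaceAllCERL

open CEFA

variable {σ : Type} {k : ℕ}

/-! ### Basic lemmas about `Reach` -/

theorem reach_nil_inv {A : CEFA σ k} {q q' : A.Q} {n : Fin k → ℤ}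
    (h : A.Reach q [] n q') : n = 0 ∧ q' = q := by
  cases h; exact ⟨rfl, rfl⟩

theorem reach_cons_inv {A : CEFA σ k} {q q'' : A.Q} {a : σ} {w : List σ} {n : Fin k → ℤ}
    (h : A.Reach q (a :: w) n q'') :
    ∃ q' η n', (q, a, q', η) ∈ A.δ ∧ A.Reach q' w n' q'' ∧ n = η + n' := by
  cases h with
  | cons ht hr => exact ⟨_, _, _, ht, hr, rfl⟩

theorem reach_append {A : CEFA σ k} {q q' q'' : A.Q} {x y : List σ} {n1 n2 : Fin k → ℤ}
    (h1 : A.Reach q x n1 q') (h2 : A.Reach q' y n2 q'') :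
    A.Reach q (x ++ y) (n1 + n2) q'' := by
  induction h1 with
  | nil => simpa using h2
  | cons ht _ ih =>
    rw [List.cons_append, add_assoc]
    exact Reach.cons ht (ih h2)

theorem reach_append_inv {A : CEFA σ k} :
    ∀ (x : List σ) {q q'' : A.Q} {y : List σ} {n : Fin k → ℤ}, A.Reach q (x ++ y) n q'' →
    ∃ q' n1 n2, A.Reach q x n1 q' ∧ A.Reach q' y n2 q'' ∧ n = n1 + n2 := by
  intro x
  induction x with
  | nil => exact fun h => ⟨_, 0, _, Reach.nil _, h, (zero_add _).symm⟩
  | cons a x ih =>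
    intro q q'' y n h
    obtain ⟨qm, η, n', ht, hr, rfl⟩ := reach_cons_inv h
    obtain ⟨q', n1, n2, h1, h2, rfl⟩ := ih hr
    exact ⟨q', η + n1, n2, Reach.cons ht h1, h2, (add_assoc _ _ _).symm⟩

theorem costs_finite {A : CEFA σ k} (hδ : A.δ.Finite) (w : List σ) :
    Set.Finite {c : Fin k → ℤ | ∃ q q', A.Reach q w c q'} := by
  induction w with
  | nil =>
    apply Set.Finite.subset (Set.finite_singleton (0 : Fin k → ℤ))
    rintro c ⟨q, q', h⟩
    exact (reach_nil_inv h).1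
  | cons a w ih =>
    apply Set.Finite.subset (Set.Finite.image2 (· + ·) (hδ.image (fun t => t.2.2.2)) ih)
    rintro c ⟨q, q', h⟩
    obtain ⟨qm, η, n', ht, hr, rfl⟩ := reach_cons_inv h
    exact Set.mem_image2_of_mem ⟨_, ht, rfl⟩ ⟨_, _, hr⟩

/-! ### The construction -/

section Construction

variable {QD : Type} (M : DFA σ QD) (A : CEFA σ k) (u : List σ)

/-- A set of DFA states is OK if none of them is accepting. -/
def Ok (S : Set QD) : Prop := ∀ d ∈ S, d ∉ M.accept

/-- Step all states in a set by one letter. -/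
def stepSet (S : Set QD) (a : σ) : Set QD := (fun d => M.step d a) '' S

/-- The transition relation of the product automaton. -/
def Trans : (A.Q × Set QD × Option QD) × σ × (A.Q × Set QD × Option QD) × (Fin k → ℤ) → Prop
  | ((q, S, none), a, (q2, S2, none), η) =>
      (q, a, q2, η) ∈ A.δ ∧ S2 = stepSet M (insert M.start S) a ∧ Ok M S2
  | ((q, S, none), a, (q2, S2, some dm2), c) =>
      A.Reach q u c q2 ∧ S2 = stepSet M S a ∧ Ok M S2 ∧ dm2 = M.step M.start a
  | ((q, S, some dm), a, (q2, S2, none), η) =>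
      dm ∈ M.accept ∧ (q, a, q2, η) ∈ A.δ ∧
        S2 = stepSet M (insert M.start (insert dm S)) a ∧ Ok M S2
  | ((q, S, some dm), a, (q2, S2, some dm2), c) =>
      (q2 = q ∧ S2 = stepSet M S a ∧ Ok M S2 ∧ dm2 = M.step dm a ∧ c = 0) ∨
      (dm ∈ M.accept ∧ A.Reach q u c q2 ∧ S2 = stepSet M (insert dm S) a ∧ Ok M S2 ∧
        dm2 = M.step M.start a)

/-- The product automaton. -/
def B : CEFA σ k where
  Q := A.Q × Set QD × Option QD
  δ := {t | Trans M A u t}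
  I := {s | s.1 ∈ A.I ∧ s.2.1 = ∅ ∧ s.2.2 = none}
  F := {s | s.1 ∈ A.F ∧ (s.2.2 = none ∨ ∃ dm, s.2.2 = some dm ∧ dm ∈ M.accept)}

theorem mem_δ_iff {t} : t ∈ (B M A u).δ ↔ Trans M A u t := Iff.rfl

/-- A DFA state is dead along `w` if no nonempty prefix of `w` leads it to acceptance. -/
def Dead (d : QD) (w : List σ) : Prop :=
  ∀ p, p <+: w → p ≠ [] → M.evalFrom d p ∉ M.accept

theorem dead_nil (d : QD) : Dead M d [] := by
  intro p hp hne
  exact absurd (List.prefix_nil.mp hp) hne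

theorem dead_of_cons {d : QD} {a : σ} {w : List σ} (h : Dead M d (a :: w)) :
    Dead M (M.step d a) w := by
  intro p hp hne
  exact h (a :: p) (List.cons_prefix_cons.mpr ⟨rfl, hp⟩) (by simp)

theorem dead_head {d : QD} {a : σ} {w : List σ} (h : Dead M d (a :: w)) :
    M.step d a ∉ M.accept := by
  simpa using h [a] ⟨w, rfl⟩ (by simp)

theorem dead_cons {d : QD} {a : σ} {w : List σ} (h1 : M.step d a ∉ M.accept)
    (h2 : Dead M (M.step d a) w) : Dead M d (a :: w) := by
  intro p hp hne
  cases p with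
  | nil => exact absurd rfl hne
  | cons b p' =>
    obtain ⟨rfl, hp'⟩ := List.cons_prefix_cons.mp hp
    cases p' with
    | nil => simpa using h1
    | cons c p'' => exact h2 _ hp' (by simp)

theorem trans_stepSet {q : A.Q} {S : Set QD} {o a s2 η}
    (ht : Trans M A u ((q, S, o), a, s2, η)) :
    ∃ X, S ⊆ X ∧ s2.2.1 = stepSet M X a ∧ Ok M s2.2.1 := by
  obtain ⟨q2, S2, o2⟩ := s2
  cases o <;> cases o2 <;> simp only [Trans] at ht
  · exact ⟨insert M.start S, Set.subset_insert _ _, ht.2.1, ht.2.2⟩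
  · exact ⟨S, subset_rfl, ht.2.1, ht.2.2.1⟩
  · exact ⟨_, (Set.subset_insert _ _).trans (Set.subset_insert _ _), ht.2.2.1, ht.2.2.2⟩
  · rcases ht with ⟨_, h2, h3, _⟩ | ⟨_, _, h2, h3, _⟩
    · exact ⟨S, subset_rfl, h2, h3⟩
    · exact ⟨insert _ S, Set.subset_insert _ _, h2, h3⟩

theorem deadFromRun : ∀ {s : (B M A u).Q} {w n s'}, (B M A u).Reach s w n s' →
    ∀ d ∈ s.2.1, Dead M d w := by
  intro s w n s' h
  induction h with
  | nil => exact fun d _ => dead_nil M d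
  | cons ht hr ih =>
    intro d hd
    rename_i s1 s2 s3 a w' η n'
    obtain ⟨q, S, o⟩ := s1
    rw [mem_δ_iff] at ht
    obtain ⟨X, hSX, hS2, hok⟩ := trans_stepSet M A u ht
    have hmem : M.step d a ∈ s2.2.1 := hS2 ▸ ⟨d, hSX hd, rfl⟩
    exact dead_cons M (hok _ hmem) (ih _ hmem)


theorem mem_scan {q q2 : A.Q} {S : Set QD} {a : σ} {η} (h1 : (q, a, q2, η) ∈ A.δ)
    (h2 : Ok M (stepSet M (insert M.start S) a)) :
    ((q, S, none), a, (q2, stepSet M (insert M.start S) a, none), η) ∈ (B M A u).δ := by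
  apply (mem_δ_iff M A u).mpr; exact ⟨h1, rfl, h2⟩

theorem mem_begin {q q2 : A.Q} {S : Set QD} {a : σ} {c} (h1 : A.Reach q u c q2)
    (h2 : Ok M (stepSet M S a)) :
    ((q, S, none), a, (q2, stepSet M S a, some (M.step M.start a)), c) ∈ (B M A u).δ := by
  apply (mem_δ_iff M A u).mpr; exact ⟨h1, rfl, h2, rfl⟩

theorem mem_inmatch {q : A.Q} {S : Set QD} {dm : QD} {a : σ}
    (h2 : Ok M (stepSet M S a)) :
    ((q, S, some dm), a, (q, stepSet M S a, some (M.step dm a)), (0 : Fin k → ℤ)) ∈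
      (B M A u).δ := by
  apply (mem_δ_iff M A u).mpr; exact Or.inl ⟨rfl, rfl, h2, rfl, rfl⟩

theorem mem_endscan {q q2 : A.Q} {S : Set QD} {dm : QD} {a : σ} {η}
    (h0 : dm ∈ M.accept) (h1 : (q, a, q2, η) ∈ A.δ)
    (h2 : Ok M (stepSet M (insert M.start (insert dm S)) a)) :
    ((q, S, some dm), a, (q2, stepSet M (insert M.start (insert dm S)) a, none), η) ∈
      (B M A u).δ := by
  apply (mem_δ_iff M A u).mpr; exact ⟨h0, h1, rfl, h2⟩

theorem mem_endbegin {q q2 : A.Q} {S : Set QD} {dm : QD} {a : σ} {c}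
    (h0 : dm ∈ M.accept) (h1 : A.Reach q u c q2)
    (h2 : Ok M (stepSet M (insert dm S) a)) :
    ((q, S, some dm), a, (q2, stepSet M (insert dm S) a, some (M.step M.start a)), c) ∈
      (B M A u).δ := by
  apply (mem_δ_iff M A u).mpr; exact Or.inr ⟨h0, h1, rfl, h2, rfl⟩

theorem scanReach : ∀ (w1 : List σ) {rest : List σ} {q q1 : A.Q} {n} (S : Set QD),
    A.Reach q w1 n q1 →
    (∀ d ∈ S, Dead M d (w1 ++ rest)) →
    (∀ x y, w1 = x ++ y → y ≠ [] → Dead M M.start (y ++ rest)) →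
    ∃ S1, (B M A u).Reach (q, S, none) w1 n (q1, S1, none) ∧ ∀ d ∈ S1, Dead M d rest := by
  intro w1
  induction w1 with
  | nil =>
    intro rest q q1 n S h hS _
    obtain ⟨rfl, rfl⟩ := reach_nil_inv h
    exact ⟨S, Reach.nil _, fun d hd => by simpa using hS d hd⟩
  | cons a w1' ih =>
    intro rest q q1 n S h hS hd0
    obtain ⟨qm, η, n', ht, hr, rfl⟩ := reach_cons_inv h
    have hboth : ∀ d ∈ insert M.start S, Dead M d (a :: (w1' ++ rest)) := by
      intro d hd
      rcases Set.mem_insert_iff.mp hd with rfl | hd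
      · exact hd0 [] (a :: w1') rfl (by simp)
      · simpa using hS d hd
    have hok : Ok M (stepSet M (insert M.start S) a) := by
      rintro _ ⟨d, hd, rfl⟩
      exact dead_head M (hboth d hd)
    have hdead' : ∀ d ∈ stepSet M (insert M.start S) a, Dead M d (w1' ++ rest) := by
      rintro _ ⟨d, hd, rfl⟩
      exact dead_of_cons M (hboth d hd)
    obtain ⟨S1, hrB, hdS1⟩ := ih _ hr hdead'
      (fun x y hxy hy => hd0 (a :: x) y (by rw [hxy]; rfl) hy)
    exact ⟨S1, Reach.cons (mem_scan M A u ht hok) hrB, hdS1⟩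

theorem matchReach : ∀ (m : List σ) {w2 : List σ} (S : Set QD) (dm : QD) (q : A.Q),
    (∀ d ∈ S, Dead M d (m ++ w2)) →
    ∃ S2, (B M A u).Reach (q, S, some dm) m 0 (q, S2, some (M.evalFrom dm m)) ∧
      ∀ d ∈ S2, Dead M d w2 := by
  intro m
  induction m with
  | nil =>
    intro w2 S dm q hS
    exact ⟨S, Reach.nil _, fun d hd => by simpa using hS d hd⟩
  | cons a m' ih =>
    intro w2 S dm q hS
    have hS' : ∀ d ∈ S, Dead M d (a :: (m' ++ w2)) := fun d hd => by simpa using hS d hd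
    have hok : Ok M (stepSet M S a) := by
      rintro _ ⟨d, hd, rfl⟩
      exact dead_head M (hS' d hd)
    have hdead' : ∀ d ∈ stepSet M S a, Dead M d (m' ++ w2) := by
      rintro _ ⟨d, hd, rfl⟩
      exact dead_of_cons M (hS' d hd)
    obtain ⟨S2, hrB, hd2⟩ := ih _ (M.step dm a) q hdead'
    refine ⟨S2, ?_, hd2⟩
    have := Reach.cons (mem_inmatch M A u (dm := dm) hok) hrB
    simpa [DFA.evalFrom] using this

theorem transfer {q : A.Q} {S : Set QD} {dm : QD} {a : σ} {w n qb} (hdm : dm ∈ M.accept)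
    (h : (B M A u).Reach (q, insert dm S, none) (a :: w) n qb) :
    (B M A u).Reach (q, S, some dm) (a :: w) n qb := by
  obtain ⟨s2, η, n', ht, hr, rfl⟩ := reach_cons_inv h
  obtain ⟨q2, S2, o2⟩ := s2
  rw [mem_δ_iff] at ht
  cases o2 with
  | none =>
    obtain ⟨h1, rfl, h3⟩ := ht
    exact Reach.cons (mem_endscan M A u hdm h1 h3) hr
  | some dm2 =>
    obtain ⟨h1, rfl, h3, rfl⟩ := ht
    exact Reach.cons (mem_endbegin M A u hdm h1 h3) hr


theorem replaceAll_nil {E : Set (List σ)} {u r : List σ} (hεE : [] ∉ E)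
    (h : ReplaceAll E u [] r) : r = [] := by
  generalize hw : ([] : List σ) = w0 at h
  cases h with
  | noMatch _ => rfl
  | step hm _ _ _ =>
    obtain ⟨h1, -⟩ := List.append_eq_nil_iff.mp hw.symm
    obtain ⟨-, rfl⟩ := List.append_eq_nil_iff.mp h1
    exact absurd hm hεE

theorem mainFwd {E' : Language σ} (hM : M.accepts = E') (hε : [] ∉ E') :
    ∀ {w r : List σ}, ReplaceAll (E' : Set (List σ)) u w r →
      ∀ {q : A.Q} {n qf} (S : Set QD),
      A.Reach q r n qf → qf ∈ A.F → (∀ d ∈ S, Dead M d w) →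
      ∃ qb ∈ (B M A u).F, (B M A u).Reach (q, S, none) w n qb := by
  intro w r h
  induction h with
  | @noMatch w hno =>
    intro q n qf S hA hF hS
    obtain ⟨S1, hrB, -⟩ := scanReach M A u w (rest := []) S hA
      (fun d hd => by simpa using hS d hd)
      (by
        intro x y hxy hy
        intro p hp hpne hacc
        obtain ⟨z, hz⟩ := hp
        rw [List.append_nil] at hz
        refine hno x p z ?_ ?_
        · rw [hxy, ← hz, List.append_assoc]
        · have : p ∈ M.accepts := M.mem_accepts.mpr hacc
          rwa [hM] at this)
    exact ⟨(qf, S1, none), ⟨hF, Or.inl rfl⟩, hrB⟩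
  | @step w1 m w2 r' hm hleft hlong hrec ih =>
    intro q n qf S hA hF hS
    rw [List.append_assoc] at hA
    obtain ⟨q1, n1, n23, hA1, hA23, rfl⟩ := reach_append_inv w1 hA
    obtain ⟨q2, c, n3, hAu, hA3, rfl⟩ := reach_append_inv u hA23
    -- scan phase on w1
    obtain ⟨S1, hr1, hd1⟩ := scanReach M A u w1 (rest := m ++ w2) S hA1
      (fun d hd => by simpa using hS d hd)
      (by
        intro x y hxy hy
        intro p hp hpne hacc
        obtain ⟨z, hz⟩ := hp
        have hpE : p ∈ (E' : Set (List σ)) := by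
          have : p ∈ M.accepts := M.mem_accepts.mpr hacc
          rwa [hM] at this
        refine hleft x p z ?_ ?_ hpE
        · rw [hxy]; simp only [List.append_assoc]; rw [hz]
        · rw [hxy]
          have hylen : 0 < y.length := List.length_pos_iff.mpr hy
          simp only [List.length_append]
          omega)
    -- m is nonempty
    obtain ⟨a1, m'', rfl⟩ : ∃ a1 m'', m = a1 :: m'' := by
      cases m with
      | nil => exact absurd hm hε
      | cons a1 m'' => exact ⟨a1, m'', rfl⟩
    have hd1' : ∀ d ∈ S1, Dead M d (a1 :: (m'' ++ w2)) := fun d hd => by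
      simpa using hd1 d hd
    have hok : Ok M (stepSet M S1 a1) := by
      rintro _ ⟨d, hd, rfl⟩
      exact dead_head M (hd1' d hd)
    have hdS : ∀ d ∈ stepSet M S1 a1, Dead M d (m'' ++ w2) := by
      rintro _ ⟨d, hd, rfl⟩
      exact dead_of_cons M (hd1' d hd)
    obtain ⟨S2, hr2, hd2⟩ := matchReach M A u m'' (stepSet M S1 a1) (M.step M.start a1) q2 hdS
    set dmE := M.evalFrom (M.step M.start a1) m'' with hdmEdef
    have hevalm : M.evalFrom M.start (a1 :: m'') = dmE := by
      simp [DFA.evalFrom, hdmEdef]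
    have hdmE : dmE ∈ M.accept := by
      have h1 : (a1 :: m'') ∈ M.accepts := by rw [hM]; exact hm
      have h2 : M.evalFrom M.start (a1 :: m'') ∈ M.accept := M.mem_accepts.mp h1
      rwa [hevalm] at h2
    have hlongDead : Dead M dmE w2 := by
      intro p hp hpne hacc
      obtain ⟨z, hz⟩ := hp
      have : M.evalFrom M.start ((a1 :: m'') ++ p) ∈ M.accept := by
        rw [M.evalFrom_of_append, hevalm]; exact hacc
      have hmpE : ((a1 :: m'') ++ p) ∈ (E' : Set (List σ)) := by
        have : ((a1 :: m'') ++ p) ∈ M.accepts := M.mem_accepts.mpr this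
        rwa [hM] at this
      refine hlong ((a1 :: m'') ++ p) z ?_ ?_ hmpE
      · rw [List.append_assoc, hz]
      · have : 0 < p.length := List.length_pos_iff.mpr hpne
        simp only [List.length_append]
        omega
    have hdins : ∀ d ∈ insert dmE S2, Dead M d w2 := by
      intro d hd
      rcases Set.mem_insert_iff.mp hd with rfl | hd
      · exact hlongDead
      · exact hd2 d hd
    obtain ⟨qb, hqbF, hr3⟩ := ih (insert dmE S2) hA3 hF hdins
    cases w2 with
    | nil =>
      obtain ⟨rfl, rfl⟩ := reach_nil_inv hr3
      have hq2F : q2 ∈ A.F := hqbF.1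
      have hrun : (B M A u).Reach (q, S, none) (w1 ++ (a1 :: (m'' ++ [])))
          (n1 + (c + (0 : Fin k → ℤ))) (q2, S2, some dmE) := by
        refine reach_append hr1 ?_
        have := Reach.cons (mem_begin M A u hAu hok) hr2
        simpa using this
      refine ⟨(q2, S2, some dmE), ⟨hq2F, Or.inr ⟨dmE, rfl, hdmE⟩⟩, ?_⟩
      simpa using hrun
    | cons b w2' =>
      have hr3' := transfer M A u hdmE hr3
      have hrun : (B M A u).Reach (q, S, none) (w1 ++ (a1 :: (m'' ++ (b :: w2'))))
          (n1 + (c + ((0 : Fin k → ℤ) + n3))) qb := by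
        refine reach_append hr1 ?_
        have := Reach.cons (mem_begin M A u hAu hok) (reach_append hr2 hr3')
        simpa using this
      refine ⟨qb, hqbF, ?_⟩
      simpa using hrun


theorem matchRunDecomp : ∀ (w : List σ) {n} {q : A.Q} {S : Set QD} {dm : QD} {qb},
    (B M A u).Reach (q, S, some dm) w n qb → qb ∈ (B M A u).F →
    ∃ mr w2, w = mr ++ w2 ∧ M.evalFrom dm mr ∈ M.accept ∧
      ((w2 = [] ∧ n = 0 ∧ q ∈ A.F) ∨
       (∃ S2, (B M A u).Reach (q, insert (M.evalFrom dm mr) S2, none) w2 n qb)) := by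
  intro w
  induction w with
  | nil =>
    intro n q S dm qb h hF
    obtain ⟨rfl, rfl⟩ := reach_nil_inv h
    obtain ⟨hq, hmode⟩ := hF
    rcases hmode with hnone | ⟨dm', heq, hdm'⟩
    · exact absurd hnone (by simp)
    · obtain rfl : dm = dm' := by simpa using heq
      exact ⟨[], [], rfl, by simpa using hdm', Or.inl ⟨rfl, rfl, hq⟩⟩
  | cons a w' ih =>
    intro n q S dm qb h hF
    obtain ⟨s2, η, n', ht, hr, rfl⟩ := reach_cons_inv h
    obtain ⟨q2, S2, o2⟩ := s2
    rw [mem_δ_iff] at ht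
    cases o2 with
    | none =>
      obtain ⟨hdm, hδ, rfl, hok⟩ := ht
      refine ⟨[], a :: w', rfl, by simpa using hdm, Or.inr ⟨S, ?_⟩⟩
      exact Reach.cons (mem_scan M A u (S := insert dm S) hδ hok) hr
    | some dm2 =>
      rcases ht with ⟨rfl, rfl, hok, rfl, rfl⟩ | ⟨hdm, hu, rfl, hok, rfl⟩
      · obtain ⟨mr, w2, rfl, hacc, hrest⟩ := ih hr hF
        refine ⟨a :: mr, w2, by simp, by simpa [DFA.evalFrom] using hacc, ?_⟩
        rcases hrest with ⟨rfl, rfl, hqF⟩ | ⟨S2', hrun⟩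
        · exact Or.inl ⟨rfl, by simp, hqF⟩
        · refine Or.inr ⟨S2', ?_⟩
          have heq : M.evalFrom dm (a :: mr) = M.evalFrom (M.step dm a) mr := by
            simp [DFA.evalFrom]
          rw [heq]
          simpa using hrun
      · refine ⟨[], a :: w', rfl, by simpa using hdm, Or.inr ⟨S, ?_⟩⟩
        exact Reach.cons (mem_begin M A u (S := insert dm S) hu hok) hr

theorem replaceAll_cons {E : Set (List σ)} {u : List σ} {a : σ} {w r : List σ}
    (hεE : [] ∉ E) (h : ReplaceAll E u w r)
    (h0 : ∀ p, p <+: (a :: w) → p ≠ [] → p ∉ E) :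
    ReplaceAll E u (a :: w) (a :: r) := by
  cases h with
  | noMatch hno =>
    refine ReplaceAll.noMatch ?_
    rintro w1 m w2 heq hm
    cases w1 with
    | nil =>
      rcases eq_or_ne m [] with rfl | hne
      · exact hεE hm
      · simp only [List.nil_append] at heq
        exact h0 m ⟨w2, heq.symm⟩ hne hm
    | cons b w1' =>
      injection heq with h1 h2
      exact hno w1' m w2 h2 hm
  | @step w1 m w2 r' hm hleft hlong hrec =>
    have key := ReplaceAll.step (E := E) (u := u) (w1 := a :: w1) hm ?_ hlong hrec
    · simpa using key
    · rintro w1' m' w2' heq hlt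
      cases w1' with
      | nil =>
        rcases eq_or_ne m' [] with rfl | hne
        · exact fun hm' => hεE hm'
        · intro hm'
          simp only [List.nil_append] at heq
          exact h0 m' ⟨w2', by rw [← heq]; simp⟩ hne hm'
      | cons b w1'' =>
        have heq' : w1 ++ m ++ w2 = w1'' ++ m' ++ w2' := by
          have : a :: (w1 ++ m ++ w2) = b :: (w1'' ++ m' ++ w2') := by
            simpa using heq
          injection this
        exact hleft w1'' m' w2' heq' (by simpa using Nat.lt_of_succ_lt_succ (by simpa using hlt))

theorem backScan {E' : Language σ} (hM : M.accepts = E') (hε : [] ∉ E') :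
    ∀ (N : ℕ) (w : List σ), w.length ≤ N → ∀ {n} {q : A.Q} {S : Set QD} {qb},
    (B M A u).Reach (q, S, none) w n qb → qb ∈ (B M A u).F →
    ∃ r qf, ReplaceAll (E' : Set (List σ)) u w r ∧ qf ∈ A.F ∧ A.Reach q r n qf := by
  intro N
  induction N with
  | zero =>
    intro w hw n q S qb h hF
    obtain rfl : w = [] := List.eq_nil_of_length_eq_zero (Nat.le_zero.mp hw)
    obtain ⟨rfl, rfl⟩ := reach_nil_inv h
    obtain ⟨hq, -⟩ := hF
    refine ⟨[], q, ReplaceAll.noMatch ?_, hq, Reach.nil q⟩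
    rintro w1 m w2 heq hm
    obtain ⟨h1, -⟩ := List.append_eq_nil_iff.mp heq.symm
    obtain ⟨-, rfl⟩ := List.append_eq_nil_iff.mp h1
    exact hε hm
  | succ N ihN =>
    intro w hw n q S qb h hF
    cases w with
    | nil =>
      obtain ⟨rfl, rfl⟩ := reach_nil_inv h
      obtain ⟨hq, -⟩ := hF
      refine ⟨[], q, ReplaceAll.noMatch ?_, hq, Reach.nil q⟩
      rintro w1 m w2 heq hm
      obtain ⟨h1, -⟩ := List.append_eq_nil_iff.mp heq.symm
      obtain ⟨-, rfl⟩ := List.append_eq_nil_iff.mp h1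
      exact hε hm
    | cons a w' =>
      have hw' : w'.length ≤ N := by simpa using hw
      obtain ⟨s2, η, n', ht, hr, rfl⟩ := reach_cons_inv h
      obtain ⟨q2, S2, o2⟩ := s2
      rw [mem_δ_iff] at ht
      cases o2 with
      | none =>
        -- scan transition
        obtain ⟨hδ, rfl, hok⟩ := ht
        obtain ⟨r', qf, hrep, hqf, hAr⟩ := ihN w' hw' hr hF
        have hd0 : Dead M (M.step M.start a) w' :=
          deadFromRun M A u hr (M.step M.start a) ⟨M.start, Set.mem_insert _ _, rfl⟩
        have hd0' : M.step M.start a ∉ M.accept :=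
          hok _ ⟨M.start, Set.mem_insert _ _, rfl⟩
        have h0 : ∀ p, p <+: (a :: w') → p ≠ [] → p ∉ (E' : Set (List σ)) := by
          intro p hp hpne hpE
          have hacc : M.evalFrom M.start p ∈ M.accept := by
            have : p ∈ M.accepts := by rw [hM]; exact hpE
            exact M.mem_accepts.mp this
          cases p with
          | nil => exact hpne rfl
          | cons b p' =>
            obtain ⟨rfl, hp'⟩ := List.cons_prefix_cons.mp hp
            cases p' with
            | nil => exact hd0' (by simpa using hacc)
            | cons c p'' =>
              exact hd0 _ hp' (by simp) (by simpa [DFA.evalFrom] using hacc)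
        exact ⟨a :: r', qf, replaceAll_cons hε hrep h0, hqf, Reach.cons hδ hAr⟩
      | some dm1 =>
        -- begin transition
        obtain ⟨hu, rfl, hok, rfl⟩ := ht
        obtain ⟨mr, w2, rfl, hacc, hrest⟩ := matchRunDecomp M A u w' hr hF
        set dmE := M.evalFrom (M.step M.start a) mr with hdmEdef
        have hmE : (a :: mr) ∈ (E' : Set (List σ)) := by
          have : M.evalFrom M.start (a :: mr) ∈ M.accept := by
            simpa [DFA.evalFrom, hdmEdef] using hacc
          have h2 : (a :: mr) ∈ M.accepts := M.mem_accepts.mpr this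
          rwa [hM] at h2
        rcases hrest with ⟨rfl, rfl, hqF⟩ | ⟨S2', hrun⟩
        · -- word ends right at the end of the match
          refine ⟨[] ++ u ++ [], q2, ?_, hqF, ?_⟩
          · have key := ReplaceAll.step (E := (E' : Set (List σ))) (u := u)
              (w1 := []) (m := a :: mr) (w2 := []) hmE ?_ ?_ (ReplaceAll.noMatch ?_)
            · simpa using key
            · intro w1' m' w2' _ hlt
              simp at hlt
            · intro m' w2' heq hlt
              intro hm'
              have : m'.length ≤ (a :: mr).length := by
                have := congrArg List.length heq
                simp only [List.append_nil, List.length_append] at this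
                omega
              omega
            · rintro w1 m w2 heq hm
              obtain ⟨h1, -⟩ := List.append_eq_nil_iff.mp heq.symm
              obtain ⟨-, rfl⟩ := List.append_eq_nil_iff.mp h1
              exact hε hm
          · simpa using hu
        · -- the run continues after the match
          have hw2 : w2.length ≤ N := by
            have := congrArg List.length (rfl : mr ++ w2 = mr ++ w2)
            have hlen : (mr ++ w2).length ≤ N := hw'
            simp only [List.length_append] at hlen
            omega
          obtain ⟨r2, qf, hrep2, hqf, hAr2⟩ := ihN w2 hw2 hrun hF
          have hdeadE : Dead M dmE w2 :=
            deadFromRun M A u hrun dmE (Set.mem_insert _ _)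
          -- longest-match condition
          have hlong : ∀ m' w2', (a :: mr) ++ w2 = m' ++ w2' →
              (a :: mr).length < m'.length → m' ∉ (E' : Set (List σ)) := by
            intro m' w2' heq hlt hm'
            rcases List.append_eq_append_iff.mp heq with ⟨t, rfl, hw2eq⟩ | ⟨c', hc1, hc2⟩
            swap
            · have := congrArg List.length hc1
              simp only [List.length_append] at this
              omega
            have htne : t ≠ [] := by
              rintro rfl
              simp at hlt
            have htpre : t <+: w2 := ⟨w2', hw2eq.symm⟩
            have : M.evalFrom M.start ((a :: mr) ++ t) ∈ M.accept := by
              have : ((a :: mr) ++ t) ∈ M.accepts := by rw [hM]; exact hm'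
              exact M.mem_accepts.mp this
            rw [M.evalFrom_of_append] at this
            have hstart : M.evalFrom M.start (a :: mr) = dmE := by simp [DFA.evalFrom, hdmEdef]
            rw [hstart] at this
            exact hdeadE t htpre htne this
          refine ⟨[] ++ u ++ r2, qf, ?_, hqf, ?_⟩
          · have key := ReplaceAll.step (E := (E' : Set (List σ))) (u := u)
              (w1 := []) (m := a :: mr) (w2 := w2) hmE ?_ hlong hrep2
            · simpa using key
            · intro w1' m' w2' _ hlt
              simp at hlt
          · simpa using reach_append hu hAr2


theorem trans_cost {t} (ht : Trans M A u t) :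
    t.2.2.2 = 0 ∨ (∃ s ∈ A.δ, t.2.2.2 = s.2.2.2) ∨ (∃ q q', A.Reach q u t.2.2.2 q') := by
  obtain ⟨⟨q, S, o⟩, a, ⟨q2, S2, o2⟩, c⟩ := t
  cases o <;> cases o2 <;> simp only [Trans] at ht
  · exact Or.inr (Or.inl ⟨(q, a, q2, c), ht.1, rfl⟩)
  · exact Or.inr (Or.inr ⟨q, q2, ht.1⟩)
  · exact Or.inr (Or.inl ⟨(q, a, q2, c), ht.2.1, rfl⟩)
  · rcases ht with ⟨-, -, -, -, h5⟩ | ⟨-, h2, -, -, -⟩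
    · exact Or.inl h5
    · exact Or.inr (Or.inr ⟨q, q2, h2⟩)

theorem B_finite [Fintype σ] [Finite QD] (hA : A.IsFinite) : (B M A u).IsFinite := by
  obtain ⟨hQ, hδ⟩ := hA
  haveI : Finite A.Q := hQ
  haveI := Fintype.ofFinite QD
  refine ⟨by show Finite (A.Q × Set QD × Option QD); infer_instance, ?_⟩
  haveI : Finite (B M A u).Q := by
    show Finite (A.Q × Set QD × Option QD); infer_instance
  have hC : Set.Finite (insert (0 : Fin k → ℤ)
      (((fun t => t.2.2.2) '' A.δ) ∪ {c | ∃ q q', A.Reach q u c q'})) :=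
    Set.Finite.insert _ ((hδ.image _).union (costs_finite hδ u))
  apply Set.Finite.subset
    ((Set.finite_univ (α := (B M A u).Q)).prod ((Set.finite_univ (α := σ)).prod
      ((Set.finite_univ (α := (B M A u).Q)).prod hC)))
  rintro ⟨s1, a, s2, c⟩ ht
  refine ⟨trivial, trivial, trivial, ?_⟩
  rcases trans_cost M A u ht with h | ⟨s, hs, heq⟩ | h
  · exact Set.mem_insert_iff.mpr (Or.inl h)
  · exact Set.mem_insert_iff.mpr (Or.inr (Or.inl ⟨s, hs, heq.symm⟩))
  · exact Set.mem_insert_iff.mpr (Or.inr (Or.inr h))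

end Construction


theorem replaceAll_preimage_isCERL {σ : Type} [Fintype σ] {k : ℕ}
    (E : Language σ) (hE : E.IsRegular) (hε : [] ∉ E) (u : List σ)
    (A : CEFA σ k) (hA : A.IsFinite) :
    IsCERL {p : List σ × (Fin k → ℤ) |
      ∃ r : List σ, ReplaceAll (E : Set (List σ)) u p.1 r ∧ (r, p.2) ∈ A.Lang} := by
  obtain ⟨QD, fQD, M, hM⟩ := hE
  refine ⟨B M A u, B_finite M A u hA, ?_⟩
  ext ⟨w, n⟩
  simp only [Set.mem_setOf_eq, CEFA.Lang]
  constructor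
  · rintro ⟨qb0, qbf, hI, hF, hr⟩
    obtain ⟨q0, SS, oo⟩ := qb0
    obtain ⟨hq0, hSS, hoo⟩ := hI
    simp only at hSS hoo
    subst hSS; subst hoo
    obtain ⟨r, qf, hrep, hqf, hAr⟩ := backScan M A u hM hε w.length w le_rfl hr hF
    exact ⟨r, hrep, q0, qf, hq0, hqf, hAr⟩
  · rintro ⟨r, hrep, q0, qf, hI, hF, hAr⟩
    obtain ⟨qb, hqbF, hrB⟩ := mainFwd M A u hM hε hrep ∅ hAr hF (by simp)
    exact ⟨(q0, ∅, none), qb, ⟨hI, rfl, rfl⟩, hqbF, hrB⟩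

end ReplaceAllCERL

theorem replaceAll_preimage_isCERL {σ : Type} [Fintype σ] {k : ℕ}
    (E : Language σ) (hE : E.IsRegular) (hε : [] ∉ E) (u : List σ)
    (A : CEFA σ k) (hA : A.IsFinite) :
    IsCERL {p : List σ × (Fin k → ℤ) |
      ∃ r : List σ, ReplaceAll (E : Set (List σ)) u p.1 r ∧ (r, p.2) ∈ A.Lang} :=
  ReplaceAllCERL.replaceAll_preimage_isCERL E hE hε u A hA
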